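/- Let G be an infinite group with finite monoid generating set X, with decidable (or just classically true) word problem. Given any finite list of words u₁,…,u_k ∈ X*, there exist nonempty words w₁,…,w_k ∈ X*, each representing the identity of G, such that the set W = {w₁u₁, w₂u₂, …, w_k u_k} is an antichain with respect to the prefix order on X*: no element of W is a proper prefix of another. -/

import Mathlib

open Classical in
lemma aux_word {G : Type*} [Monoid G] {X : Type*} (ev : X → G)
    (hgen : Submonoid.closure (Set.range ev) = ⊤) (g : G) :
    ∃ l : List X, (l.map ev).prod = g := by
  have hg : g ∈ Submonoid.closure (Set.range ev) := by rw [hgen]; trivial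
  obtain ⟨l, hl, hprod⟩ := Submonoid.exists_list_of_mem_closure hg
  subst hprod
  clear hg
  induction l with
  | nil => exact ⟨[], rfl⟩
  | cons a t ih =>
    obtain ⟨m, hm⟩ := ih (fun x hx => hl x (List.mem_cons_of_mem _ hx))
    obtain ⟨x, hx⟩ := hl a (List.mem_cons_self)
    exact ⟨x :: m, by simp [hx, hm]⟩

open Classical in
lemma aux_geod {G : Type*} [Monoid G] [Infinite G] {X : Type*} [Fintype X] (ev : X → G)
    (hgen : Submonoid.closure (Set.range ev) = ⊤) (n : ℕ) :
    ∃ l : List X, n < l.length ∧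
      ∀ m : List X, (m.map ev).prod = (l.map ev).prod → l.length ≤ m.length := by
  have hS : ((fun l : List X => (l.map ev).prod) '' {l | l.length ≤ n}).Finite :=
    (List.finite_length_le X n).image _
  obtain ⟨g, hg⟩ := hS.infinite_compl.nonempty
  have hex : ∃ m : ℕ, ∃ l : List X, l.length = m ∧ (l.map ev).prod = g := by
    obtain ⟨l, hl⟩ := aux_word ev hgen g
    exact ⟨l.length, l, rfl, hl⟩
  obtain ⟨l, hlen, hlg⟩ := Nat.find_spec hex
  refine ⟨l, ?_, ?_⟩
  · by_contra h
    push_neg at h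
    exact hg ⟨l, by simpa using h, hlg⟩
  · intro m hm
    rw [hlg] at hm
    have : Nat.find hex ≤ m.length := Nat.find_min' hex ⟨m, rfl, hm⟩
    omega

/-- Antichain lemma: in an infinite group `G` with finite monoid generating set `X`
(evaluation `ev : X → G`), for any words `u₁, …, u_k` over `X` there exist nonempty words
`w₁, …, w_k` each representing the identity such that `{w₁u₁, …, w_k u_k}` is an antichain
in prefix order: no `wᵢuᵢ` is a proper prefix of any `wⱼuⱼ`. -/
theorem stmt3 {G : Type*} [Group G] [Infinite G] {X : Type*} [Fintype X] (ev : X → G)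
    (hgen : Submonoid.closure (Set.range ev) = ⊤)
    (k : ℕ) (u : Fin k → List X) :
    ∃ w : Fin k → List X,
      (∀ i, w i ≠ [] ∧ ((w i).map ev).prod = 1) ∧
      ∀ i j : Fin k, ¬ ∃ z : List X, z ≠ [] ∧ w j ++ u j = (w i ++ u i) ++ z := by
  induction k with
  | zero => exact ⟨fun i => i.elim0, fun i => i.elim0, fun i => i.elim0⟩
  | succ k ih =>
    obtain ⟨w', hw'1, hw'2⟩ := ih (fun i => u i.castSucc)
    set N : ℕ := Finset.univ.sup (fun i : Fin k => (w' i ++ u i.castSucc).length) with hN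
    obtain ⟨g, hglen, hgeo⟩ := aux_geod ev hgen N
    obtain ⟨r, hr⟩ := aux_word ev hgen ((g.map ev).prod)⁻¹
    have hwl1 : (((g ++ r)).map ev).prod = 1 := by simp [hr]
    have hwlne : (g ++ r) ≠ [] := by
      intro h
      rw [List.append_eq_nil_iff] at h
      rw [h.1] at hglen
      simp at hglen
    have hlenle : ∀ i : Fin k, (w' i ++ u i.castSucc).length ≤ N := by
      intro i; rw [hN]; exact Finset.le_sup (f := fun i : Fin k => (w' i ++ u i.castSucc).length) (Finset.mem_univ i)
    refine ⟨Fin.snoc w' (g ++ r), ?_, ?_⟩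
    · intro i
      refine Fin.lastCases ?_ ?_ i
      · simp only [Fin.snoc_last]; exact ⟨hwlne, hwl1⟩
      · intro j; simpa using hw'1 j
    · intro i j hzz
      obtain ⟨z, hz, heq⟩ := hzz
      rcases Fin.eq_castSucc_or_eq_last i with ⟨i', rfl⟩ | rfl <;>
        rcases Fin.eq_castSucc_or_eq_last j with ⟨j', rfl⟩ | rfl
      · -- both old
        rw [Fin.snoc_castSucc, Fin.snoc_castSucc] at heq
        exact hw'2 i' j' ⟨z, hz, heq⟩
      · -- i old, j = last : W_i proper prefix of g ++ r ++ u last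
        rw [Fin.snoc_castSucc, Fin.snoc_last] at heq
        set Wi := w' i' ++ u i'.castSucc with hWi
        have hWiN : Wi.length ≤ N := hlenle i'
        have hWig : Wi.length ≤ g.length := by omega
        -- heq : (g ++ r) ++ u (Fin.last k) = Wi ++ z
        have heq' : g ++ (r ++ u (Fin.last k)) = Wi ++ z := by
          rw [← List.append_assoc]; exact heq
        have hpre : g.take Wi.length = Wi := by
          have := congrArg (List.take Wi.length) heq'
          rwa [List.take_append_of_le_length hWig, List.take_left] at this
        set t := g.drop Wi.length with ht
        have hgsplit : g = Wi ++ t := by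
          conv_lhs => rw [← List.take_append_drop Wi.length g]
          rw [hpre]
        -- evaluation of Wi equals evaluation of u i'.castSucc
        have hWieval : ((Wi.map ev)).prod = ((u i'.castSucc).map ev).prod := by
          rw [hWi, List.map_append, List.prod_append, (hw'1 i').2, one_mul]
        have hmeval : (((u i'.castSucc ++ t).map ev)).prod = ((g.map ev)).prod := by
          rw [hgsplit]
          simp only [List.map_append, List.prod_append, hWieval]
        have hge := hgeo _ hmeval
        have h1 : g.length = Wi.length + t.length := by
          rw [hgsplit, List.length_append]
        have h2 : (u i'.castSucc ++ t).length = (u i'.castSucc).length + t.length :=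
          List.length_append
        have h3 : (w' i').length ≥ 1 :=
          List.length_pos_iff.mpr (hw'1 i').1
        have h4 : Wi.length = (w' i').length + (u i'.castSucc).length :=
          List.length_append
        omega
      · -- i = last, j old : length contradiction
        rw [Fin.snoc_castSucc, Fin.snoc_last] at heq
        have := congrArg List.length heq
        simp only [List.length_append] at this
        have hj := hlenle j'
        rw [List.length_append] at hj
        have hzlen : z.length ≥ 1 := List.length_pos_iff.mpr hz
        have : g.length ≤ (g ++ r).length := by simp
        rw [List.length_append] at this
        omega
      · -- both last
        have := congrArg List.length heq
        simp only [List.length_append] at this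
        have hzlen : z.length ≥ 1 := List.length_pos_iff.mpr hz
        omega
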